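/- Let n ≥ 1 and q ≥ 1, and for each i = 1,…,n let M_i be a q×q real symmetric positive semidefinite matrix and z_i, a_i, b_i ∈ ℝ^q. Set A = Σ_{i=1}^n (a_i−b_i)ᵀM_i(a_i−b_i) and E = Σ_{i=1}^n (z_i−b_i)ᵀM_i(z_i−b_i). Then (1/2)·Σ_{i=1}^n [ (z_i−b_i)ᵀM_i(z_i−b_i) − (z_i−a_i)ᵀM_i(z_i−a_i) ] ≤ (1/2)·A + √(A·E). -/

import Mathlib

open Matrix

lemma stmt7_sym {q : ℕ} {M : Matrix (Fin q) (Fin q) ℝ} (hM : M.PosSemidef)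
    (u v : Fin q → ℝ) : u ⬝ᵥ M.mulVec v = v ⬝ᵥ M.mulVec u := by
  rw [Matrix.dotProduct_mulVec, ← Matrix.mulVec_transpose]
  have h : Mᵀ = M := by
    have := hM.1.eq
    simpa [Matrix.conjTranspose_eq_transpose_of_trivial] using this
  rw [h, dotProduct_comm]

lemma stmt7_expand_sub {q : ℕ} {M : Matrix (Fin q) (Fin q) ℝ} (hM : M.PosSemidef)
    (u d : Fin q → ℝ) :
    u ⬝ᵥ M.mulVec u - (u - d) ⬝ᵥ M.mulVec (u - d) =
      2 * (d ⬝ᵥ M.mulVec u) - d ⬝ᵥ M.mulVec d := by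
  have h1 := stmt7_sym hM d u
  simp only [Matrix.mulVec_sub, dotProduct_sub, sub_dotProduct]
  linarith

lemma stmt7_expand_add {q : ℕ} {M : Matrix (Fin q) (Fin q) ℝ} (hM : M.PosSemidef)
    (u d : Fin q → ℝ) (t : ℝ) :
    (d + t • u) ⬝ᵥ M.mulVec (d + t • u) =
      (u ⬝ᵥ M.mulVec u) * (t * t) + 2 * (d ⬝ᵥ M.mulVec u) * t + d ⬝ᵥ M.mulVec d := by
  have h1 := stmt7_sym hM d u
  simp only [Matrix.mulVec_add, dotProduct_add, add_dotProduct,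
    Matrix.mulVec_smul, dotProduct_smul, smul_dotProduct, smul_eq_mul]
  linear_combination (-t) * h1

/-- **summed log-likelihood-ratio bound, equations (A.12)/(A.27).** For
symmetric PSD matrices `M i` and vectors `z i, a i, b i`, with
`A = Σᵢ (aᵢ-bᵢ)ᵀMᵢ(aᵢ-bᵢ)` and `E = Σᵢ (zᵢ-bᵢ)ᵀMᵢ(zᵢ-bᵢ)`,
`(1/2) Σᵢ [(zᵢ-bᵢ)ᵀMᵢ(zᵢ-bᵢ) - (zᵢ-aᵢ)ᵀMᵢ(zᵢ-aᵢ)] ≤ (1/2) A + √(A E)`. -/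
theorem stmt7 (n q : ℕ) (hn : 1 ≤ n) (hq : 1 ≤ q)
    (M : Fin n → Matrix (Fin q) (Fin q) ℝ) (hM : ∀ i, (M i).PosSemidef)
    (z a b : Fin n → Fin q → ℝ) :
    (1 / 2 : ℝ) * ∑ i, ((z i - b i) ⬝ᵥ (M i).mulVec (z i - b i) -
        (z i - a i) ⬝ᵥ (M i).mulVec (z i - a i)) ≤
      (1 / 2 : ℝ) * (∑ i, (a i - b i) ⬝ᵥ (M i).mulVec (a i - b i)) +
        Real.sqrt ((∑ i, (a i - b i) ⬝ᵥ (M i).mulVec (a i - b i)) *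
          (∑ i, (z i - b i) ⬝ᵥ (M i).mulVec (z i - b i))) := by
  set S : ℝ := ∑ i, (a i - b i) ⬝ᵥ (M i).mulVec (z i - b i) with hSdef
  set A : ℝ := ∑ i, (a i - b i) ⬝ᵥ (M i).mulVec (a i - b i) with hAdef
  set E : ℝ := ∑ i, (z i - b i) ⬝ᵥ (M i).mulVec (z i - b i) with hEdef
  have hA0 : 0 ≤ A := Finset.sum_nonneg fun i _ => by
    simpa using (hM i).dotProduct_mulVec_nonneg (a i - b i)
  have hE0 : 0 ≤ E := Finset.sum_nonneg fun i _ => by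
    simpa using (hM i).dotProduct_mulVec_nonneg (z i - b i)
  have hdiff : ∑ i, ((z i - b i) ⬝ᵥ (M i).mulVec (z i - b i) -
      (z i - a i) ⬝ᵥ (M i).mulVec (z i - a i)) = 2 * S - A := by
    rw [hSdef, hAdef, Finset.mul_sum, ← Finset.sum_sub_distrib]
    apply Finset.sum_congr rfl
    intro i _
    have hza : z i - a i = (z i - b i) - (a i - b i) := by abel
    rw [hza, stmt7_expand_sub (hM i)]
  have hquad : ∀ t : ℝ, 0 ≤ E * (t * t) + (2 * S) * t + A := by
    intro t
    have key : E * (t * t) + (2 * S) * t + A =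
        ∑ i, ((a i - b i) + t • (z i - b i)) ⬝ᵥ
          (M i).mulVec ((a i - b i) + t • (z i - b i)) := by
      rw [hSdef, hAdef, hEdef]
      rw [Finset.sum_mul, Finset.mul_sum, Finset.sum_mul]
      rw [← Finset.sum_add_distrib, ← Finset.sum_add_distrib]
      apply Finset.sum_congr rfl
      intro i _
      rw [stmt7_expand_add (hM i)]
    rw [key]
    exact Finset.sum_nonneg fun i _ => by
      simpa using (hM i).dotProduct_mulVec_nonneg ((a i - b i) + t • (z i - b i))
  have hdisc : discrim E (2 * S) A ≤ 0 := discrim_le_zero hquad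
  have hS2 : S ^ 2 ≤ A * E := by
    rw [discrim] at hdisc
    nlinarith [hdisc]
  have hSle : S ≤ Real.sqrt (A * E) := by
    calc S ≤ |S| := le_abs_self S
    _ = Real.sqrt (S ^ 2) := by rw [Real.sqrt_sq_eq_abs]
    _ ≤ Real.sqrt (A * E) := Real.sqrt_le_sqrt hS2
  rw [hdiff]
  linarith
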